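/- For k, λ, β > 0 and t > 0, the identity ((β - iue^{-kt})/(β - iu))^{λ/k} = exp(λ t (φ̃(u) - 1)) holds, where φ̃(u) = ∫_0^1 β e^{ktv}/(β e^{ktv} - iu) dv; i.e. the law of the Gamma-OU process at time t (started at 0) is compound Poisson with jump characteristic function φ̃. -/

import Mathlib

open Complex

/-- The law of the Gamma-OU process at time `t` (started at 0) is compound Poisson:
`((β - iue^{-kt})/(β - iu))^{λ/k} = exp(λ t (φ̃(u) - 1))` where
`φ̃(u) = ∫_0^1 β e^{ktv}/(β e^{ktv} - iu) dv` is the characteristic function of a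
uniform mixture of exponential laws. -/
theorem gammaOU_compound_poisson_representation
    (k lam β : ℝ) (hk : 0 < k) (hlam : 0 < lam) (hβ : 0 < β)
    (t : ℝ) (ht : 0 < t) (u : ℝ) :
    (((β : ℂ) - Complex.I * u * Real.exp (-k * t)) / ((β : ℂ) - Complex.I * u))
        ^ ((lam / k : ℝ) : ℂ)
      = Complex.exp ((lam * t : ℝ) *
          ((∫ v in (0:ℝ)..1,
              ((β * Real.exp (k * t * v) : ℝ) : ℂ)
                / (((β * Real.exp (k * t * v) : ℝ) : ℂ) - Complex.I * u)) - 1)) := by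
  have hkt : (0:ℝ) < k * t := mul_pos hk ht
  set K := k * t with hK
  have g : ℝ → ℂ := fun v => ((β * Real.exp (K * v) : ℝ) : ℂ) - Complex.I * u
  set g : ℝ → ℂ := fun v => ((β * Real.exp (K * v) : ℝ) : ℂ) - Complex.I * u with hg
  have hgre : ∀ v, 0 < (g v).re := by
    intro v
    have : (g v).re = β * Real.exp (K * v) := by
      simp only [hg, Complex.sub_re, Complex.ofReal_re, Complex.mul_re, Complex.I_re,
        Complex.I_im, Complex.ofReal_im]
      ring
    rw [this]; positivity
  have hgne : ∀ v, g v ≠ 0 := by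
    intro v h
    have := hgre v
    rw [h] at this; simp at this
  -- Step 1: compute the integral via FTC
  have hderiv : ∀ v : ℝ, HasDerivAt (fun v => ((K:ℂ))⁻¹ * Complex.log (g v))
      (((β * Real.exp (K * v) : ℝ) : ℂ) / g v) v := by
    intro v
    have h1 : HasDerivAt (fun v : ℝ => (β * Real.exp (K * v) : ℝ))
        (β * Real.exp (K * v) * K) v := by
      have := (Real.hasDerivAt_exp (K * v)).comp v
        ((hasDerivAt_id v).const_mul K)
      simpa [mul_comm, mul_left_comm, mul_assoc] using this.const_mul β
    have h2 : HasDerivAt g (((β * Real.exp (K * v) * K : ℝ) : ℂ)) v := by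
      rw [hg]
      exact h1.ofReal_comp.sub_const (Complex.I * u)
    have h3 : HasDerivAt (fun v => Complex.log (g v))
        (((β * Real.exp (K * v) * K : ℝ) : ℂ) / g v) v :=
      h2.clog_real (Complex.mem_slitPlane_iff.2 (Or.inl (hgre v)))
    have h4 := h3.const_mul ((K:ℂ))⁻¹
    convert h4 using 1
    · rfl
    have hKne : (K:ℂ) ≠ 0 := by exact_mod_cast hkt.ne'
    push_cast
    field_simp
  have hcont : Continuous fun v : ℝ => ((β * Real.exp (K * v) : ℝ) : ℂ) / g v := by
    apply Continuous.div
    · exact Complex.continuous_ofReal.comp (by fun_prop)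
    · rw [hg]
      exact (Complex.continuous_ofReal.comp (by fun_prop)).sub continuous_const
    · exact fun v => hgne v
  have hint : (∫ v in (0:ℝ)..1, ((β * Real.exp (K * v) : ℝ) : ℂ) / g v)
      = ((K:ℂ))⁻¹ * Complex.log (g 1) - ((K:ℂ))⁻¹ * Complex.log (g 0) := by
    have := intervalIntegral.integral_eq_sub_of_hasDerivAt
      (f := fun v => ((K:ℂ))⁻¹ * Complex.log (g v))
      (f' := fun v => ((β * Real.exp (K * v) : ℝ) : ℂ) / g v)
      (fun v _ => hderiv v) (hcont.intervalIntegrable 0 1)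
    simpa using this
  set A : ℂ := g 1 with hA
  set B : ℂ := g 0 with hB
  have hAne : A ≠ 0 := hgne 1
  have hBne : B ≠ 0 := hgne 0
  have hB0 : B = (β:ℂ) - Complex.I * u := by
    rw [hB, hg]; norm_num
  -- Step 2: the base of the LHS
  have hbase : ((β : ℂ) - Complex.I * u * Real.exp (-k * t))
      = (Real.exp (-K) : ℝ) * A := by
    rw [hA, hg]
    simp only [mul_one]
    have e1 : Real.exp (-K) * (β * Real.exp K) = β := by
      rw [← mul_assoc, mul_comm (Real.exp (-K)) β, mul_assoc, ← Real.exp_add]; simp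
    have e2 : -k * t = -K := by rw [hK]; ring
    calc ((β:ℂ)) - Complex.I * u * Real.exp (-k * t)
        = ↑(Real.exp (-K) * (β * Real.exp K)) - Complex.I * u * ↑(Real.exp (-K)) := by
          rw [e1, e2]
      _ = ↑(Real.exp (-K)) * (↑(β * Real.exp K) - Complex.I * ↑u) := by push_cast; ring
  have hzne : ((β : ℂ) - Complex.I * u * Real.exp (-k * t)) ≠ 0 := by
    rw [hbase]
    exact mul_ne_zero (by exact_mod_cast (Real.exp_pos _).ne') hAne
  -- log of the quotient
  have hargA : |Complex.arg A| < Real.pi / 2 :=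
    Complex.abs_arg_lt_pi_div_two_iff.2 (Or.inl (hgre 1))
  have hargBinv : |Complex.arg B⁻¹| < Real.pi / 2 := by
    refine Complex.abs_arg_lt_pi_div_two_iff.2 (Or.inl ?_)
    rw [Complex.inv_re]
    exact div_pos (hgre 0) (Complex.normSq_pos.2 hBne)
  have hlogdiv : Complex.log (A / B) = Complex.log A - Complex.log B := by
    rw [div_eq_mul_inv]
    rw [Complex.log_mul hAne (inv_ne_zero hBne),
      Complex.log_inv B (by
        intro h
        have := hgre 0
        rw [Complex.arg_eq_pi_iff] at h
        exact absurd this (not_lt.2 h.1.le)), sub_eq_add_neg]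
    constructor
    · nlinarith [abs_lt.1 hargA, abs_lt.1 hargBinv, Real.pi_pos]
    · nlinarith [abs_lt.1 hargA, abs_lt.1 hargBinv, Real.pi_pos]
  have hlogz : Complex.log (((β : ℂ) - Complex.I * u * Real.exp (-k * t)) / B)
      = (-K : ℝ) + Complex.log A - Complex.log B := by
    rw [hbase, mul_div_assoc, Complex.log_ofReal_mul (Real.exp_pos _)
      (div_ne_zero hAne hBne), hlogdiv, Real.log_exp]
    ring
  -- Step 3: put it together
  rw [show (∫ v in (0:ℝ)..1, ((β * Real.exp (K * v) : ℝ) : ℂ)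
        / (((β * Real.exp (K * v) : ℝ) : ℂ) - Complex.I * u))
      = ((K:ℂ))⁻¹ * Complex.log A - ((K:ℂ))⁻¹ * Complex.log B from hint]
  rw [← hB0]
  rw [Complex.cpow_def_of_ne_zero (div_ne_zero hzne hBne), hlogz]
  congr 1
  have hkne : (k:ℂ) ≠ 0 := by exact_mod_cast hk.ne'
  have htne : (t:ℂ) ≠ 0 := by exact_mod_cast ht.ne'
  have hKne : (K:ℂ) ≠ 0 := by exact_mod_cast hkt.ne'
  rw [hK] at hKne ⊢
  push_cast
  field_simp
  ring
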